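/- Let n ≥ 1, let s be a seminorm on ℝⁿ, let Q ≥ 1, and let T : ℝⁿ → ℝⁿ be a bijective linear map such that the norm v ↦ |T(v)| (Euclidean norm of T(v)) is Q-quasi-conformal. Then Q^{−2(n−1)}·𝓘ⁿ_avg(s) ≤ |det T|^{−1}·𝓘ⁿ_avg(s ∘ T) ≤ Q^{2(n−1)}·𝓘ⁿ_avg(s). -/

import Mathlib

open MeasureTheory Metric
open scoped RealInnerProductSpace

section Helpers

variable {n : ℕ}


lemma radial_lip {x y : EuclideanSpace ℝ (Fin n)} {r : ℝ} (hr : 0 < r)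
    (hx : r ≤ ‖x‖) (hy : r ≤ ‖y‖) :
    ‖‖x‖⁻¹ • x - ‖y‖⁻¹ • y‖ ≤ r⁻¹ * ‖x - y‖ := by
  set a := ‖x‖ with ha
  set b := ‖y‖ with hb
  have ha0 : 0 < a := lt_of_lt_of_le hr hx
  have hb0 : 0 < b := lt_of_lt_of_le hr hy
  have hCS : abs (⟪x, y⟫) ≤ a * b := abs_real_inner_le_norm x y
  set t := ⟪x, y⟫ with ht
  have h1 : ‖a⁻¹ • x - b⁻¹ • y‖ ^ 2 = 2 - 2 * (a⁻¹ * (b⁻¹ * t)) := by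
    rw [norm_sub_sq_real, real_inner_smul_left, real_inner_smul_right, norm_smul, norm_smul]
    simp only [norm_inv, Real.norm_eq_abs, abs_of_pos ha0, abs_of_pos hb0, ← ha, ← hb, ← ht]
    rw [inv_mul_cancel₀ ha0.ne', inv_mul_cancel₀ hb0.ne']
    ring
  have h2 : (r⁻¹ * ‖x - y‖) ^ 2 = (r ^ 2)⁻¹ * (a ^ 2 - 2 * t + b ^ 2) := by
    rw [mul_pow, norm_sub_sq_real, inv_pow]
  have hsq : ‖a⁻¹ • x - b⁻¹ • y‖ ^ 2 ≤ (r⁻¹ * ‖x - y‖) ^ 2 := by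
    rw [h1, h2, ← sub_nonneg]
    have hab : r * r ≤ a * b := mul_le_mul hx hy hr.le ha0.le
    have htab : t ≤ a * b := (abs_le.mp hCS).2
    have e : (r ^ 2)⁻¹ * (a ^ 2 - 2 * t + b ^ 2) - (2 - 2 * (a⁻¹ * (b⁻¹ * t)))
        = (r ^ 2 * (a * b))⁻¹ *
          ((a * b) * (a * b) * (a - b) ^ 2 / (a * b) + 2 * (a * b - t) * (a * b - r ^ 2)) := by
      field_simp
      ring
    rw [e]
    have h3 : 0 ≤ a * b - t := by linarith
    have h4 : 0 ≤ a * b - r ^ 2 := by nlinarith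
    positivity
  have h0 : 0 ≤ r⁻¹ * ‖x - y‖ := by positivity
  nlinarith [norm_nonneg (a⁻¹ • x - b⁻¹ • y)]

lemma seminorm_cont (s : Seminorm ℝ (EuclideanSpace ℝ (Fin n))) : Continuous s := by
  have hco : ∀ (x : EuclideanSpace ℝ (Fin n)) (i : Fin n), |x i| ≤ ‖x‖ := by
    intro x i
    rw [EuclideanSpace.norm_eq]
    rw [show |x i| = Real.sqrt (|x i| ^ 2) by rw [Real.sqrt_sq (abs_nonneg _)]]
    apply Real.sqrt_le_sqrt
    have : |x i| ^ 2 = ‖x i‖ ^ 2 := by rw [Real.norm_eq_abs]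
    rw [this]
    exact Finset.single_le_sum (f := fun j => ‖x j‖ ^ 2) (fun j _ => sq_nonneg _)
      (Finset.mem_univ i)
  obtain ⟨C, hC0, hC⟩ : ∃ C : ℝ, 0 ≤ C ∧ ∀ x : EuclideanSpace ℝ (Fin n), s x ≤ C * ‖x‖ := by
    set b := EuclideanSpace.basisFun (Fin n) ℝ
    refine ⟨∑ i, s (b i), Finset.sum_nonneg fun i _ => apply_nonneg _ _, fun x => ?_⟩
    calc s x = s (∑ i, b.repr x i • b i) := by rw [b.sum_repr x]
    _ ≤ ∑ i, s (b.repr x i • b i) := by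
        have key : ∀ (t : Finset (Fin n)) (f : Fin n → EuclideanSpace ℝ (Fin n)),
            s (∑ i ∈ t, f i) ≤ ∑ i ∈ t, s (f i) := by
          intro t f
          induction t using Finset.cons_induction with
          | empty => simp
          | cons a t ha ih =>
            rw [Finset.sum_cons, Finset.sum_cons]
            exact (map_add_le_add s _ _).trans (by linarith)
        exact key Finset.univ _
    _ = ∑ i, |b.repr x i| * s (b i) := by
        simp only [map_smul_eq_mul, Real.norm_eq_abs]
    _ ≤ ∑ i, ‖x‖ * s (b i) := by
        refine Finset.sum_le_sum fun i _ => ?_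
        refine mul_le_mul_of_nonneg_right ?_ (apply_nonneg _ _)
        simpa [b, EuclideanSpace.basisFun_repr] using hco x i
    _ = (∑ i, s (b i)) * ‖x‖ := by rw [← Finset.mul_sum, mul_comm]
  refine (LipschitzWith.of_dist_le_mul (K := C.toNNReal) fun x y => ?_).continuous
  rw [Real.dist_eq, Real.coe_toNNReal C hC0, dist_eq_norm]
  calc |s x - s y| ≤ s (x - y) := by
        simpa using s.norm_sub_map_le_sub x y
  _ ≤ C * ‖x - y‖ := hC _

lemma map_transfer {d : ℝ} (hd : 0 ≤ d) {φ ψ : EuclideanSpace ℝ (Fin n) → EuclideanSpace ℝ (Fin n)}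
    (hφm : Measurable φ)
    (hφS : Set.MapsTo φ (sphere (0 : EuclideanSpace ℝ (Fin n)) 1) (sphere 0 1))
    (hinv : ∀ v ∈ sphere (0 : EuclideanSpace ℝ (Fin n)) 1, ψ (φ v) = v)
    {K : NNReal} (hψL : LipschitzOnWith K ψ (sphere 0 1))
    {f : EuclideanSpace ℝ (Fin n) → ENNReal} (hf : Measurable f) :
    ∫⁻ v in sphere (0 : EuclideanSpace ℝ (Fin n)) 1, f (φ v) ∂μH[d] ≤
      (K : ENNReal) ^ d * ∫⁻ v in sphere (0 : EuclideanSpace ℝ (Fin n)) 1, f v ∂μH[d] := by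
  set S := sphere (0 : EuclideanSpace ℝ (Fin n)) 1 with hSdef
  have hS : MeasurableSet S := (isClosed_sphere).measurableSet
  have hle : ((μH[d] : Measure (EuclideanSpace ℝ (Fin n))).restrict S).map φ ≤
      (K : ENNReal) ^ d • (μH[d] : Measure (EuclideanSpace ℝ (Fin n))).restrict S := by
    rw [Measure.le_iff]
    intro A hA
    rw [Measure.map_apply hφm hA, Measure.restrict_apply (hφm hA), Measure.smul_apply,
      Measure.restrict_apply hA, smul_eq_mul]
    have hsub : φ ⁻¹' A ∩ S ⊆ ψ '' (A ∩ S) := by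
      rintro x ⟨hxA, hxS⟩
      exact ⟨φ x, ⟨hxA, hφS hxS⟩, hinv x hxS⟩
    calc μH[d] (φ ⁻¹' A ∩ S) ≤ μH[d] (ψ '' (A ∩ S)) := measure_mono hsub
    _ ≤ (K : ENNReal) ^ d * μH[d] (A ∩ S) :=
        (hψL.mono Set.inter_subset_right).hausdorffMeasure_image_le hd
  calc ∫⁻ v in S, f (φ v) ∂μH[d]
      = ∫⁻ v, f v ∂(((μH[d] : Measure (EuclideanSpace ℝ (Fin n))).restrict S).map φ) :=
      (lintegral_map hf hφm).symm
  _ ≤ ∫⁻ v, f v ∂((K : ENNReal) ^ d • (μH[d] : Measure (EuclideanSpace ℝ (Fin n))).restrict S) :=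
      lintegral_mono' hle le_rfl
  _ = (K : ENNReal) ^ d * ∫⁻ v in S, f v ∂μH[d] := lintegral_smul_measure _ _

lemma det_bounds (hn : 1 ≤ n) (T : EuclideanSpace ℝ (Fin n) ≃ₗ[ℝ] EuclideanSpace ℝ (Fin n))
    {m M : ℝ} (hm : 0 < m)
    (hlow : ∀ v : EuclideanSpace ℝ (Fin n), ‖v‖ = 1 → m ≤ ‖T v‖)
    (hup : ∀ v : EuclideanSpace ℝ (Fin n), ‖v‖ = 1 → ‖T v‖ ≤ M)
    (hMex : ∃ v : EuclideanSpace ℝ (Fin n), ‖v‖ = 1 ∧ ‖T v‖ = M)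
    (hmex : ∃ v : EuclideanSpace ℝ (Fin n), ‖v‖ = 1 ∧ ‖T v‖ = m) :
    M * m ^ (n - 1) ≤ |LinearMap.det T.toLinearMap| ∧
      |LinearMap.det T.toLinearMap| ≤ m * M ^ (n - 1) := by
  obtain ⟨vM, hvM1, hvM2⟩ := hMex
  obtain ⟨vm, hvm1, hvm2⟩ := hmex
  have hM0 : 0 < M := lt_of_lt_of_le hm (hvM2 ▸ hlow vM hvM1)
  set T' := T.toLinearMap with hT'
  set A := LinearMap.adjoint T' * T' with hAdef
  have hAsym : A.IsSymmetric := LinearMap.isSymmetric_adjoint_mul_self T'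
  have hrank : Module.finrank ℝ (EuclideanSpace ℝ (Fin n)) = n := finrank_euclideanSpace_fin
  set b := hAsym.eigenvectorBasis hrank with hbdef
  set lam := hAsym.eigenvalues hrank with hlamdef
  have hAinner : ∀ v : EuclideanSpace ℝ (Fin n), ⟪v, A v⟫ = ‖T' v‖ ^ 2 := by
    intro v
    have h0 : A v = LinearMap.adjoint T' (T' v) := rfl
    rw [h0, LinearMap.adjoint_inner_right, real_inner_self_eq_norm_sq]
  have hb1 : ∀ i, ‖b i‖ = 1 := fun i => b.orthonormal.1 i
  have heig : ∀ i, lam i = ‖T' (b i)‖ ^ 2 := by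
    intro i
    have h1 : A (b i) = (lam i : ℝ) • b i := hAsym.apply_eigenvectorBasis hrank i
    have h2 := hAinner (b i)
    rw [h1, real_inner_smul_right, real_inner_self_eq_norm_sq, hb1 i] at h2
    simpa using h2
  have heig_low : ∀ i, m ^ 2 ≤ lam i := by
    intro i
    rw [heig i]
    have h' : ‖T' (b i)‖ = ‖T (b i)‖ := rfl
    rw [h']
    have := hlow (b i) (hb1 i)
    nlinarith [norm_nonneg (T (b i))]
  have heig_up : ∀ i, lam i ≤ M ^ 2 := by
    intro i
    rw [heig i]
    have h' : ‖T' (b i)‖ = ‖T (b i)‖ := rfl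
    rw [h']
    have := hup (b i) (hb1 i)
    nlinarith [norm_nonneg (T (b i)), hm.le.trans (hlow (b i) (hb1 i))]
  have hexp : ∀ v : EuclideanSpace ℝ (Fin n), ⟪v, A v⟫ = ∑ i, lam i * (b.repr v i) ^ 2 := by
    intro v
    have h1 : ⟪v, A v⟫ = ⟪b.repr v, b.repr (A v)⟫ := (b.repr.inner_map_map v (A v)).symm
    rw [h1, PiLp.inner_apply]
    refine Finset.sum_congr rfl fun i _ => ?_
    rw [hAsym.eigenvectorBasis_apply_self_apply hrank v i]
    simp [RCLike.inner_apply]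
    ring
  have hnorm1 : ∀ v : EuclideanSpace ℝ (Fin n), ∑ i, (b.repr v i) ^ 2 = ‖v‖ ^ 2 := by
    intro v
    have h1 : ⟪v, v⟫ = ⟪b.repr v, b.repr v⟫ := (b.repr.inner_map_map v v).symm
    rw [real_inner_self_eq_norm_sq, PiLp.inner_apply] at h1
    simp only [RCLike.inner_apply, conj_trivial] at h1
    rw [h1]
    exact Finset.sum_congr rfl fun i _ => by ring
  have hne : Nonempty (Fin n) := ⟨⟨0, hn⟩⟩
  obtain ⟨i0, -, hi0⟩ := Finset.exists_max_image Finset.univ lam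
    ⟨Classical.arbitrary _, Finset.mem_univ _⟩
  obtain ⟨i1, -, hi1⟩ := Finset.exists_min_image Finset.univ lam
    ⟨Classical.arbitrary _, Finset.mem_univ _⟩
  have hMsq : M ^ 2 ≤ lam i0 := by
    have h1 := hAinner vM
    rw [hexp vM] at h1
    have h2 : ∑ i, lam i * (b.repr vM i) ^ 2 ≤ ∑ i, lam i0 * (b.repr vM i) ^ 2 :=
      Finset.sum_le_sum fun i _ =>
        mul_le_mul_of_nonneg_right (hi0 i (Finset.mem_univ i)) (sq_nonneg _)
    have h3 : ∑ i, lam i0 * (b.repr vM i) ^ 2 = lam i0 := by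
      rw [← Finset.mul_sum, hnorm1, hvM1]; ring
    have h4 : ‖T' vM‖ = M := hvM2
    nlinarith
  have hmsq : lam i1 ≤ m ^ 2 := by
    have h1 := hAinner vm
    rw [hexp vm] at h1
    have h2 : ∑ i, lam i1 * (b.repr vm i) ^ 2 ≤ ∑ i, lam i * (b.repr vm i) ^ 2 :=
      Finset.sum_le_sum fun i _ =>
        mul_le_mul_of_nonneg_right (hi1 i (Finset.mem_univ i)) (sq_nonneg _)
    have h3 : ∑ i, lam i1 * (b.repr vm i) ^ 2 = lam i1 := by
      rw [← Finset.mul_sum, hnorm1, hvm1]; ring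
    have h4 : ‖T' vm‖ = m := hvm2
    nlinarith
  have hdiag : LinearMap.toMatrix b.toBasis b.toBasis A = Matrix.diagonal lam := by
    ext i j
    rw [LinearMap.toMatrix_apply, OrthonormalBasis.coe_toBasis,
      hAsym.apply_eigenvectorBasis hrank j, _root_.map_smul, ← OrthonormalBasis.coe_toBasis,
      Module.Basis.repr_self]
    rcases eq_or_ne i j with h | h
    · subst h; simp [Matrix.diagonal_apply_eq]; rfl
    · simp [Matrix.diagonal_apply_ne _ h, Finsupp.single_apply, Ne.symm h]
  have hdetA : LinearMap.det A = ∏ i, lam i := by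
    rw [← LinearMap.det_toMatrix b.toBasis, hdiag, Matrix.det_diagonal]
  have hadj : LinearMap.det (LinearMap.adjoint T') = LinearMap.det T' := by
    rw [← LinearMap.det_toMatrix b.toBasis, LinearMap.toMatrix_adjoint b b,
      Matrix.det_conjTranspose, star_trivial, LinearMap.det_toMatrix]
  have hdetAT : (LinearMap.det T') ^ 2 = ∏ i, lam i := by
    rw [← hdetA, hAdef, map_mul, hadj]; ring
  have hcard : (Finset.univ.erase i0).card = n - 1 := by
    rw [Finset.card_erase_of_mem (Finset.mem_univ i0), Finset.card_univ, Fintype.card_fin]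
  have hcard1 : (Finset.univ.erase i1).card = n - 1 := by
    rw [Finset.card_erase_of_mem (Finset.mem_univ i1), Finset.card_univ, Fintype.card_fin]
  constructor
  · -- lower bound
    have hsplit : ∏ i, lam i = lam i0 * ∏ i ∈ Finset.univ.erase i0, lam i :=
      (Finset.mul_prod_erase _ _ (Finset.mem_univ i0)).symm
    have hprodlow : (m ^ 2) ^ (n - 1) ≤ ∏ i ∈ Finset.univ.erase i0, lam i := by
      calc (m ^ 2) ^ (n - 1) = ∏ _i ∈ Finset.univ.erase i0, m ^ 2 := by
            rw [Finset.prod_const, hcard]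
      _ ≤ ∏ i ∈ Finset.univ.erase i0, lam i :=
          Finset.prod_le_prod (fun i _ => sq_nonneg m) (fun i _ => heig_low i)
    have h5 : (M * m ^ (n - 1)) ^ 2 ≤ (LinearMap.det T') ^ 2 := by
      rw [hdetAT, hsplit]
      calc (M * m ^ (n - 1)) ^ 2 = M ^ 2 * (m ^ 2) ^ (n - 1) := by ring
      _ ≤ lam i0 * ∏ i ∈ Finset.univ.erase i0, lam i := by
          apply mul_le_mul hMsq hprodlow (by positivity) (le_trans (by positivity) hMsq)
    have h6 : 0 ≤ M * m ^ (n - 1) := by positivity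
    nlinarith [abs_nonneg (LinearMap.det T'), sq_abs (LinearMap.det T')]
  · have hsplit : ∏ i, lam i = lam i1 * ∏ i ∈ Finset.univ.erase i1, lam i :=
      (Finset.mul_prod_erase _ _ (Finset.mem_univ i1)).symm
    have hprodup : ∏ i ∈ Finset.univ.erase i1, lam i ≤ (M ^ 2) ^ (n - 1) := by
      calc ∏ i ∈ Finset.univ.erase i1, lam i ≤ ∏ _i ∈ Finset.univ.erase i1, M ^ 2 :=
            Finset.prod_le_prod (fun i _ => le_trans (by positivity) (heig_low i))
              (fun i _ => heig_up i)
      _ = (M ^ 2) ^ (n - 1) := by rw [Finset.prod_const, hcard1]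
    have h5 : (LinearMap.det T') ^ 2 ≤ (m * M ^ (n - 1)) ^ 2 := by
      rw [hdetAT, hsplit]
      calc lam i1 * ∏ i ∈ Finset.univ.erase i1, lam i ≤ (m ^ 2) * (M ^ 2) ^ (n - 1) := by
            apply mul_le_mul hmsq hprodup
              (Finset.prod_nonneg fun i _ => le_trans (by positivity) (heig_low i))
              (by positivity)
      _ = (m * M ^ (n - 1)) ^ 2 := by ring
    have h6 : 0 ≤ m * M ^ (n - 1) := by positivity
    nlinarith [abs_nonneg (LinearMap.det T'), sq_abs (LinearMap.det T')]

end Helpers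

/-- `𝓘^p_avg(s) = ω_n⁻¹ ∫_{S^{n-1}} s(v)^p dH^{n-1}(v)`. -/
noncomputable def Iavg (n : ℕ) (p : ℝ) (s : Seminorm ℝ (EuclideanSpace ℝ (Fin n))) : ℝ :=
  (volume (ball (0 : EuclideanSpace ℝ (Fin n)) 1)).toReal⁻¹ *
    ∫ v in sphere (0 : EuclideanSpace ℝ (Fin n)) 1, (s v) ^ p ∂(μH[(n : ℝ) - 1])

theorem Iavg_comp_quasiconformal (n : ℕ) (hn : 1 ≤ n)
    (s : Seminorm ℝ (EuclideanSpace ℝ (Fin n))) (Q : ℝ) (hQ : 1 ≤ Q)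
    (T : EuclideanSpace ℝ (Fin n) ≃ₗ[ℝ] EuclideanSpace ℝ (Fin n))
    (hT : ∀ v w : EuclideanSpace ℝ (Fin n), ‖v‖ = 1 → ‖w‖ = 1 → ‖T v‖ ≤ Q * ‖T w‖) :
    (Q ^ (2 * (n - 1)))⁻¹ * Iavg n n s ≤
        |LinearMap.det T.toLinearMap|⁻¹ * Iavg n n (s.comp T.toLinearMap) ∧
      |LinearMap.det T.toLinearMap|⁻¹ * Iavg n n (s.comp T.toLinearMap) ≤
        Q ^ (2 * (n - 1)) * Iavg n n s := by
  classical
  set S := sphere (0 : EuclideanSpace ℝ (Fin n)) 1 with hSdef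
  set k := n - 1 with hk
  -- sphere nonempty
  have hne : S.Nonempty := by
    refine ⟨EuclideanSpace.single ⟨0, hn⟩ (1 : ℝ), ?_⟩
    simp [hSdef, mem_sphere_zero_iff_norm, EuclideanSpace.norm_single]
  have hTc : Continuous T := T.toLinearMap.continuous_of_finiteDimensional
  have hTc' : Continuous T.symm := T.symm.toLinearMap.continuous_of_finiteDimensional
  have hcomp : IsCompact S := isCompact_sphere 0 1
  obtain ⟨vM, hvMS, hvMmax⟩ := hcomp.exists_isMaxOn hne (continuous_norm.comp hTc).continuousOn
  obtain ⟨vm, hvmS, hvmmin⟩ := hcomp.exists_isMinOn hne (continuous_norm.comp hTc).continuousOn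
  set M := ‖T vM‖ with hM
  set m := ‖T vm‖ with hm
  have hvM1 : ‖vM‖ = 1 := mem_sphere_zero_iff_norm.1 hvMS
  have hvm1 : ‖vm‖ = 1 := mem_sphere_zero_iff_norm.1 hvmS
  have hmemS : ∀ v : EuclideanSpace ℝ (Fin n), ‖v‖ = 1 → v ∈ S := fun v hv =>
    mem_sphere_zero_iff_norm.2 hv
  have hup : ∀ v : EuclideanSpace ℝ (Fin n), ‖v‖ = 1 → ‖T v‖ ≤ M :=
    fun v hv => hvMmax (hmemS v hv)
  have hlow : ∀ v : EuclideanSpace ℝ (Fin n), ‖v‖ = 1 → m ≤ ‖T v‖ :=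
    fun v hv => hvmmin (hmemS v hv)
  have hm0 : 0 < m := by
    rw [hm, norm_pos_iff]
    intro h
    have : vm = 0 := by simpa using congrArg T.symm h
    rw [this] at hvm1; simp at hvm1
  have hmM : m ≤ M := hlow vM hvM1
  have hM0 : 0 < M := lt_of_lt_of_le hm0 hmM
  have hMQ : M ≤ Q * m := hT vM vm hvM1 hvm1
  -- global bounds
  have hTub : ∀ x : EuclideanSpace ℝ (Fin n), ‖T x‖ ≤ M * ‖x‖ := by
    intro x
    rcases eq_or_ne x 0 with rfl | hx
    · simp
    · have hx0 : 0 < ‖x‖ := norm_pos_iff.2 hx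
      have hu : ‖(‖x‖⁻¹ • x : EuclideanSpace ℝ (Fin n))‖ = 1 := by
        rw [norm_smul, norm_inv, norm_norm, inv_mul_cancel₀ hx0.ne']
      have := hup _ hu
      rw [_root_.map_smul, norm_smul, norm_inv, norm_norm] at this
      calc ‖T x‖ = ‖x‖ * (‖x‖⁻¹ * ‖T x‖) := by field_simp
      _ ≤ ‖x‖ * M := mul_le_mul_of_nonneg_left this hx0.le
      _ = M * ‖x‖ := mul_comm _ _
  have hTlb : ∀ x : EuclideanSpace ℝ (Fin n), m * ‖x‖ ≤ ‖T x‖ := by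
    intro x
    rcases eq_or_ne x 0 with rfl | hx
    · simp
    · have hx0 : 0 < ‖x‖ := norm_pos_iff.2 hx
      have hu : ‖(‖x‖⁻¹ • x : EuclideanSpace ℝ (Fin n))‖ = 1 := by
        rw [norm_smul, norm_inv, norm_norm, inv_mul_cancel₀ hx0.ne']
      have := hlow _ hu
      rw [_root_.map_smul, norm_smul, norm_inv, norm_norm] at this
      calc m * ‖x‖ ≤ (‖x‖⁻¹ * ‖T x‖) * ‖x‖ := mul_le_mul_of_nonneg_right this hx0.le
      _ = ‖T x‖ := by field_simp
  have hSub : ∀ y : EuclideanSpace ℝ (Fin n), ‖T.symm y‖ ≤ m⁻¹ * ‖y‖ := by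
    intro y
    have h1 := hTlb (T.symm y)
    rw [T.apply_symm_apply] at h1
    calc ‖T.symm y‖ = m⁻¹ * (m * ‖T.symm y‖) := by field_simp
    _ ≤ m⁻¹ * ‖y‖ := mul_le_mul_of_nonneg_left h1 (inv_nonneg.2 hm0.le)
  have hSlb : ∀ y : EuclideanSpace ℝ (Fin n), M⁻¹ * ‖y‖ ≤ ‖T.symm y‖ := by
    intro y
    have h1 := hTub (T.symm y)
    rw [T.apply_symm_apply] at h1
    calc M⁻¹ * ‖y‖ ≤ M⁻¹ * (M * ‖T.symm y‖) := mul_le_mul_of_nonneg_left h1 (inv_nonneg.2 hM0.le)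
    _ = ‖T.symm y‖ := by field_simp
  -- the sphere maps
  set φ : EuclideanSpace ℝ (Fin n) → EuclideanSpace ℝ (Fin n) :=
    fun x => ‖T x‖⁻¹ • T x with hφdef
  set ψ : EuclideanSpace ℝ (Fin n) → EuclideanSpace ℝ (Fin n) :=
    fun y => ‖T.symm y‖⁻¹ • T.symm y with hψdef
  have hφm : Measurable φ :=
    ((continuous_norm.comp hTc).measurable.inv).smul hTc.measurable
  have hψm : Measurable ψ :=
    ((continuous_norm.comp hTc').measurable.inv).smul hTc'.measurable
  have hTvne : ∀ v : EuclideanSpace ℝ (Fin n), v ∈ S → 0 < ‖T v‖ := by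
    intro v hv
    have hv1 : ‖v‖ = 1 := mem_sphere_zero_iff_norm.1 hv
    calc (0:ℝ) < m := hm0
    _ ≤ ‖T v‖ := hlow v hv1
  have hSvne : ∀ v : EuclideanSpace ℝ (Fin n), v ∈ S → 0 < ‖T.symm v‖ := by
    intro v hv
    have hv1 : ‖v‖ = 1 := mem_sphere_zero_iff_norm.1 hv
    calc (0:ℝ) < M⁻¹ := inv_pos.2 hM0
    _ = M⁻¹ * ‖v‖ := by rw [hv1, mul_one]
    _ ≤ ‖T.symm v‖ := hSlb v
  have hφS : Set.MapsTo φ S S := by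
    intro v hv
    have h0 := hTvne v hv
    rw [hSdef, mem_sphere_zero_iff_norm]
    rw [hφdef]
    simp only
    rw [norm_smul, norm_inv, norm_norm, inv_mul_cancel₀ h0.ne']
  have hψS : Set.MapsTo ψ S S := by
    intro v hv
    have h0 := hSvne v hv
    rw [hSdef, mem_sphere_zero_iff_norm]
    rw [hψdef]
    simp only
    rw [norm_smul, norm_inv, norm_norm, inv_mul_cancel₀ h0.ne']
  have hψφ : ∀ v ∈ S, ψ (φ v) = v := by
    intro v hv
    have hv1 : ‖v‖ = 1 := mem_sphere_zero_iff_norm.1 hv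
    have h0 := hTvne v hv
    show ‖T.symm (‖T v‖⁻¹ • T v)‖⁻¹ • T.symm (‖T v‖⁻¹ • T v) = v
    rw [_root_.map_smul, T.symm_apply_apply, norm_smul, norm_inv, norm_norm, hv1, mul_one,
      inv_inv, smul_smul, mul_inv_cancel₀ h0.ne', one_smul]
  have hφψ : ∀ v ∈ S, φ (ψ v) = v := by
    intro v hv
    have hv1 : ‖v‖ = 1 := mem_sphere_zero_iff_norm.1 hv
    have h0 := hSvne v hv
    show ‖T (‖T.symm v‖⁻¹ • T.symm v)‖⁻¹ • T (‖T.symm v‖⁻¹ • T.symm v) = v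
    rw [_root_.map_smul, T.apply_symm_apply, norm_smul, norm_inv, norm_norm, hv1, mul_one,
      inv_inv, smul_smul, mul_inv_cancel₀ h0.ne', one_smul]
  -- Lipschitz bounds
  set K : NNReal := Real.toNNReal (M / m) with hKdef
  have hKcoe : (K : ℝ) = M / m := Real.coe_toNNReal _ (div_nonneg hM0.le hm0.le)
  have hψL : LipschitzOnWith K ψ S := by
    apply LipschitzOnWith.of_dist_le_mul
    intro x hx y hy
    rw [dist_eq_norm, dist_eq_norm, hKcoe]
    have hx1 : ‖x‖ = 1 := mem_sphere_zero_iff_norm.1 hx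
    have hy1 : ‖y‖ = 1 := mem_sphere_zero_iff_norm.1 hy
    have hrx : M⁻¹ ≤ ‖T.symm x‖ := by
      calc M⁻¹ = M⁻¹ * ‖x‖ := by rw [hx1, mul_one]
      _ ≤ _ := hSlb x
    have hry : M⁻¹ ≤ ‖T.symm y‖ := by
      calc M⁻¹ = M⁻¹ * ‖y‖ := by rw [hy1, mul_one]
      _ ≤ _ := hSlb y
    calc ‖ψ x - ψ y‖ ≤ (M⁻¹)⁻¹ * ‖T.symm x - T.symm y‖ :=
          radial_lip (inv_pos.2 hM0) hrx hry
    _ = M * ‖T.symm (x - y)‖ := by rw [inv_inv, map_sub]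
    _ ≤ M * (m⁻¹ * ‖x - y‖) := mul_le_mul_of_nonneg_left (hSub _) hM0.le
    _ = M / m * ‖x - y‖ := by field_simp
  have hφL : LipschitzOnWith K φ S := by
    apply LipschitzOnWith.of_dist_le_mul
    intro x hx y hy
    rw [dist_eq_norm, dist_eq_norm, hKcoe]
    have hx1 : ‖x‖ = 1 := mem_sphere_zero_iff_norm.1 hx
    have hy1 : ‖y‖ = 1 := mem_sphere_zero_iff_norm.1 hy
    have hrx : m ≤ ‖T x‖ := hlow x hx1
    have hry : m ≤ ‖T y‖ := hlow y hy1
    calc ‖φ x - φ y‖ ≤ m⁻¹ * ‖T x - T y‖ := radial_lip hm0 hrx hry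
    _ = m⁻¹ * ‖T (x - y)‖ := by rw [map_sub]
    _ ≤ m⁻¹ * (M * ‖x - y‖) := mul_le_mul_of_nonneg_left (hTub _) (inv_nonneg.2 hm0.le)
    _ = M / m * ‖x - y‖ := by field_simp
  -- lintegral comparison
  have hscont : Continuous s := seminorm_cont s
  have hd0 : (0:ℝ) ≤ (n:ℝ) - 1 := by
    have : (1:ℝ) ≤ (n:ℝ) := by exact_mod_cast hn
    linarith
  have hdk : ((n:ℝ) - 1) = ((k:ℕ):ℝ) := by
    rw [hk, Nat.cast_sub hn, Nat.cast_one]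
  set f0 : EuclideanSpace ℝ (Fin n) → ENNReal := fun v => ENNReal.ofReal ((s v) ^ n) with hf0def
  set f1 : EuclideanSpace ℝ (Fin n) → ENNReal :=
    fun v => ENNReal.ofReal ((s (T v)) ^ n) with hf1def
  have hf0m : Measurable f0 := (hscont.pow n).measurable.ennreal_ofReal
  have hf1m : Measurable f1 := (((hscont.comp hTc).pow n)).measurable.ennreal_ofReal
  set JA := ∫⁻ v in S, f0 v ∂μH[(n : ℝ) - 1] with hJAdef
  set JB := ∫⁻ v in S, f1 v ∂μH[(n : ℝ) - 1] with hJBdef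
  have hKd : (K : ENNReal) ^ ((n:ℝ) - 1) = ENNReal.ofReal ((M/m) ^ k) := by
    rw [hdk, ENNReal.rpow_natCast, ENNReal.ofReal_pow (div_nonneg hM0.le hm0.le)]
    rfl
  have hBA : JB ≤ ENNReal.ofReal (M ^ n * (M/m) ^ k) * JA := by
    have step1 : JB ≤ ∫⁻ v in S, ENNReal.ofReal (M ^ n * (s (φ v)) ^ n) ∂μH[(n : ℝ) - 1] := by
      rw [hJBdef]
      refine setLIntegral_mono_ae
        (Measurable.aemeasurable ?_) (Filter.Eventually.of_forall ?_)
      · exact (((hscont.measurable.comp hφm).pow_const n).const_mul _).ennreal_ofReal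
      · intro v hv
        apply ENNReal.ofReal_le_ofReal
        have h0 := hTvne v hv
        have hTveq : T v = ‖T v‖ • φ v := by
          rw [hφdef]
          simp only
          rw [smul_smul, mul_inv_cancel₀ h0.ne', one_smul]
        have hsv : s (T v) = ‖T v‖ * s (φ v) := by
          conv_lhs => rw [hTveq]
          rw [map_smul_eq_mul, Real.norm_eq_abs, abs_of_nonneg (norm_nonneg _)]
        rw [hsv, mul_pow]
        exact mul_le_mul_of_nonneg_right
          (pow_le_pow_left₀ (norm_nonneg _) (hvMmax hv) n) (by positivity)
    have step2 : ∫⁻ v in S, ENNReal.ofReal (M ^ n * (s (φ v)) ^ n) ∂μH[(n : ℝ) - 1]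
        = ENNReal.ofReal (M ^ n) * ∫⁻ v in S, f0 (φ v) ∂μH[(n : ℝ) - 1] := by
      simp_rw [ENNReal.ofReal_mul (by positivity : (0:ℝ) ≤ M ^ n)]
      rw [lintegral_const_mul' _ _ ENNReal.ofReal_ne_top]
    have step3 : ∫⁻ v in S, f0 (φ v) ∂μH[(n : ℝ) - 1] ≤
        (K : ENNReal) ^ ((n:ℝ) - 1) * JA :=
      map_transfer hd0 hφm hφS hψφ hψL hf0m
    calc JB ≤ ∫⁻ v in S, ENNReal.ofReal (M ^ n * (s (φ v)) ^ n) ∂μH[(n : ℝ) - 1] := step1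
    _ = ENNReal.ofReal (M ^ n) * ∫⁻ v in S, f0 (φ v) ∂μH[(n : ℝ) - 1] := step2
    _ ≤ ENNReal.ofReal (M ^ n) * ((K : ENNReal) ^ ((n:ℝ) - 1) * JA) :=
        mul_le_mul_right step3 _
    _ = ENNReal.ofReal (M ^ n * (M/m) ^ k) * JA := by
        rw [hKd, ← mul_assoc, ← ENNReal.ofReal_mul (by positivity : (0:ℝ) ≤ M ^ n)]
  have hAB : JA ≤ ENNReal.ofReal ((m⁻¹) ^ n * (M/m) ^ k) * JB := by
    have step1 : JA ≤ ∫⁻ v in S, ENNReal.ofReal ((m⁻¹) ^ n * (s (T (ψ v))) ^ n)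
        ∂μH[(n : ℝ) - 1] := by
      rw [hJAdef]
      refine setLIntegral_mono_ae
        (Measurable.aemeasurable ?_) (Filter.Eventually.of_forall ?_)
      · exact ((((hscont.comp hTc).measurable.comp hψm).pow_const n).const_mul _).ennreal_ofReal
      · intro v hv
        apply ENNReal.ofReal_le_ofReal
        have hv1 : ‖v‖ = 1 := mem_sphere_zero_iff_norm.1 hv
        have h0 := hSvne v hv
        have hTψ : T (ψ v) = ‖T.symm v‖⁻¹ • v := by
          rw [hψdef]
          simp only
          rw [_root_.map_smul, T.apply_symm_apply]
        have hsv : s v = ‖T.symm v‖ * s (T (ψ v)) := by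
          rw [hTψ, map_smul_eq_mul, Real.norm_eq_abs, abs_of_nonneg (inv_nonneg.2 (norm_nonneg _))]
          field_simp
        rw [hsv, mul_pow]
        apply mul_le_mul_of_nonneg_right _ (by positivity)
        apply pow_le_pow_left₀ (norm_nonneg _)
        calc ‖T.symm v‖ ≤ m⁻¹ * ‖v‖ := hSub v
        _ = m⁻¹ := by rw [hv1, mul_one]
    have step2 : ∫⁻ v in S, ENNReal.ofReal ((m⁻¹) ^ n * (s (T (ψ v))) ^ n) ∂μH[(n : ℝ) - 1]
        = ENNReal.ofReal ((m⁻¹) ^ n) * ∫⁻ v in S, f1 (ψ v) ∂μH[(n : ℝ) - 1] := by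
      simp_rw [ENNReal.ofReal_mul (by positivity : (0:ℝ) ≤ (m⁻¹) ^ n)]
      rw [lintegral_const_mul' _ _ ENNReal.ofReal_ne_top]
    have step3 : ∫⁻ v in S, f1 (ψ v) ∂μH[(n : ℝ) - 1] ≤
        (K : ENNReal) ^ ((n:ℝ) - 1) * JB :=
      map_transfer hd0 hψm hψS hφψ hφL hf1m
    calc JA ≤ ∫⁻ v in S, ENNReal.ofReal ((m⁻¹) ^ n * (s (T (ψ v))) ^ n) ∂μH[(n : ℝ) - 1] := step1
    _ = ENNReal.ofReal ((m⁻¹) ^ n) * ∫⁻ v in S, f1 (ψ v) ∂μH[(n : ℝ) - 1] := step2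
    _ ≤ ENNReal.ofReal ((m⁻¹) ^ n) * ((K : ENNReal) ^ ((n:ℝ) - 1) * JB) :=
        mul_le_mul_right step3 _
    _ = ENNReal.ofReal ((m⁻¹) ^ n * (M/m) ^ k) * JB := by
        rw [hKd, ← mul_assoc, ← ENNReal.ofReal_mul (by positivity : (0:ℝ) ≤ (m⁻¹) ^ n)]
  -- determinant bounds
  obtain ⟨hDl, hDu⟩ := det_bounds hn T hm0 hlow hup ⟨vM, hvM1, rfl⟩ ⟨vm, hvm1, rfl⟩
  set D := |LinearMap.det T.toLinearMap| with hDdef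
  have hD0 : 0 < D := lt_of_lt_of_le (by positivity) hDl
  have hnk : n = k + 1 := (Nat.succ_pred_eq_of_pos hn).symm
  -- rewrite the statement integrands
  have hIavg0 : Iavg n n s = (volume (ball (0 : EuclideanSpace ℝ (Fin n)) 1)).toReal⁻¹ *
      ∫ v in S, (s v) ^ n ∂μH[(n : ℝ) - 1] := by
    rw [Iavg]
    congr 1
    refine integral_congr_ae (Filter.Eventually.of_forall fun v => ?_)
    simp only [Real.rpow_natCast]
  have hIavg1 : Iavg n n (s.comp T.toLinearMap) =
      (volume (ball (0 : EuclideanSpace ℝ (Fin n)) 1)).toReal⁻¹ *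
      ∫ v in S, (s (T v)) ^ n ∂μH[(n : ℝ) - 1] := by
    rw [Iavg]
    congr 1
    refine integral_congr_ae (Filter.Eventually.of_forall fun v => ?_)
    simp only [Real.rpow_natCast, Seminorm.comp_apply, LinearEquiv.coe_coe]
  set ω := (volume (ball (0 : EuclideanSpace ℝ (Fin n)) 1)).toReal⁻¹ with hωdef
  have hω0 : 0 ≤ ω := inv_nonneg.2 ENNReal.toReal_nonneg
  set IA := ∫ v in S, (s v) ^ n ∂μH[(n : ℝ) - 1] with hIAdef
  set IB := ∫ v in S, (s (T v)) ^ n ∂μH[(n : ℝ) - 1] with hIBdef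
  rw [hIavg0, hIavg1]
  have hIAeq : IA = JA.toReal := by
    rw [hIAdef, hJAdef,
      integral_eq_lintegral_of_nonneg_ae (f := fun v => s v ^ n) (Filter.Eventually.of_forall fun v => pow_nonneg (apply_nonneg _ _) _)
        (hscont.pow n).aestronglyMeasurable.restrict]
  have hIBeq : IB = JB.toReal := by
    rw [hIBdef, hJBdef,
      integral_eq_lintegral_of_nonneg_ae (f := fun v => s (T v) ^ n) (Filter.Eventually.of_forall fun v => pow_nonneg (apply_nonneg _ _) _)
        ((show Continuous fun v : EuclideanSpace ℝ (Fin n) => s (T v) from hscont.comp hTc).pow n).aestronglyMeasurable.restrict]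
  by_cases hJA : JA = ⊤
  · have hJB : JB = ⊤ := by
      by_contra h
      have h1 : (⊤ : ENNReal) ≤ ENNReal.ofReal ((m⁻¹) ^ n * (M/m) ^ k) * JB := hJA ▸ hAB
      exact (ENNReal.mul_ne_top ENNReal.ofReal_ne_top h) (top_le_iff.1 h1)
    have hIA : IA = 0 := by rw [hIAeq, hJA, ENNReal.toReal_top]
    have hIB : IB = 0 := by rw [hIBeq, hJB, ENNReal.toReal_top]
    rw [hIA, hIB]
    constructor <;> simp
  · have hJB : JB ≠ ⊤ := by
      intro h
      have h1 : (⊤ : ENNReal) ≤ ENNReal.ofReal (M ^ n * (M/m) ^ k) * JA := h ▸ hBA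
      exact (ENNReal.mul_ne_top ENNReal.ofReal_ne_top hJA) (top_le_iff.1 h1)
    have hIA0 : 0 ≤ IA := hIAeq ▸ ENNReal.toReal_nonneg
    have hIB0 : 0 ≤ IB := hIBeq ▸ ENNReal.toReal_nonneg
    have hBAr : IB ≤ (M ^ n * (M/m) ^ k) * IA := by
      rw [hIAeq, hIBeq]
      have h1 := ENNReal.toReal_mono (ENNReal.mul_ne_top ENNReal.ofReal_ne_top hJA) hBA
      rwa [ENNReal.toReal_mul, ENNReal.toReal_ofReal (by positivity)] at h1
    have hABr : IA ≤ ((m⁻¹) ^ n * (M/m) ^ k) * IB := by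
      rw [hIAeq, hIBeq]
      have h1 := ENNReal.toReal_mono (ENNReal.mul_ne_top ENNReal.ofReal_ne_top hJB) hAB
      rwa [ENNReal.toReal_mul, ENNReal.toReal_ofReal (by positivity)] at h1
    have hQm : M / m ≤ Q := (div_le_iff₀ hm0).2 (by linarith)
    have hQ0 : (0:ℝ) < Q := lt_of_lt_of_le one_pos hQ
    -- core upper bound
    have core_up : D⁻¹ * IB ≤ Q ^ (2 * k) * IA := by
      have e2 : M ^ n * (M/m) ^ k = (M * m ^ k) * ((M/m) ^ (2 * k)) := by
        rw [hnk, div_pow, div_pow]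
        field_simp
        ring
      calc D⁻¹ * IB ≤ D⁻¹ * ((M ^ n * (M/m) ^ k) * IA) :=
            mul_le_mul_of_nonneg_left hBAr (inv_nonneg.2 hD0.le)
      _ = (D⁻¹ * (M * m ^ k)) * ((M/m) ^ (2 * k) * IA) := by rw [e2]; ring
      _ ≤ 1 * ((M/m) ^ (2 * k) * IA) := by
          refine mul_le_mul_of_nonneg_right ?_ (mul_nonneg (by positivity) hIA0)
          rw [inv_mul_le_iff₀ hD0, mul_one]
          exact hDl
      _ = (M/m) ^ (2 * k) * IA := one_mul _
      _ ≤ Q ^ (2 * k) * IA :=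
          mul_le_mul_of_nonneg_right (pow_le_pow_left₀ (by positivity) hQm _) hIA0
    have core_low : (Q ^ (2 * k))⁻¹ * IA ≤ D⁻¹ * IB := by
      have e1 : (m⁻¹) ^ n * (M/m) ^ k = (m * M ^ k)⁻¹ * ((M/m) ^ (2 * k)) := by
        rw [hnk, div_pow, div_pow, inv_pow]
        field_simp
        ring
      calc (Q ^ (2 * k))⁻¹ * IA ≤ (Q ^ (2 * k))⁻¹ * (((m⁻¹) ^ n * (M/m) ^ k) * IB) :=
            mul_le_mul_of_nonneg_left hABr (by positivity)
      _ = ((Q ^ (2 * k))⁻¹ * (M/m) ^ (2 * k)) * ((m * M ^ k)⁻¹ * IB) := by rw [e1]; ring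
      _ ≤ 1 * ((m * M ^ k)⁻¹ * IB) := by
          refine mul_le_mul_of_nonneg_right ?_ (mul_nonneg (by positivity) hIB0)
          rw [inv_mul_le_iff₀ (by positivity), mul_one]
          exact pow_le_pow_left₀ (by positivity) hQm _
      _ = (m * M ^ k)⁻¹ * IB := one_mul _
      _ ≤ D⁻¹ * IB := mul_le_mul_of_nonneg_right (inv_anti₀ hD0 hDu) hIB0
    constructor
    · calc (Q ^ (2 * k))⁻¹ * (ω * IA) = ω * ((Q ^ (2 * k))⁻¹ * IA) := by ring
      _ ≤ ω * (D⁻¹ * IB) := mul_le_mul_of_nonneg_left core_low hω0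
      _ = D⁻¹ * (ω * IB) := by ring
    · calc D⁻¹ * (ω * IB) = ω * (D⁻¹ * IB) := by ring
      _ ≤ ω * (Q ^ (2 * k) * IA) := mul_le_mul_of_nonneg_left core_up hω0
      _ = Q ^ (2 * k) * (ω * IA) := by ring
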